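/- Let K be an algebraically closed field of characteristic 0 and let G be the semidirect product K^× ⋉ (⊕_{k≥1} K), where t ∈ K^× acts on the k-th summand by multiplication by t^k. Then for every n, there is no injective group homomorphism from G into GL_n(K); that is, G is not a linear group. -/

import Mathlib

open Polynomial Matrix

section Stmt19Aux

variable {K : Type*} [Field K]

lemma stmt19_algebraMap_eq {n : ℕ} (μ : K) :
    algebraMap K (Matrix (Fin n) (Fin n) K) μ = Matrix.scalar (Fin n) μ := by
  ext i j
  simp [Matrix.algebraMap_eq_diagonal, Matrix.scalar_apply, Matrix.diagonal]

lemma stmt19_eval_charpoly {n : ℕ} (M : Matrix (Fin n) (Fin n) K) (μ : K) :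
    M.charpoly.eval μ = (Matrix.scalar (Fin n) μ - M).det := by
  rw [Matrix.charpoly, _root_.eval_det, matPolyEquiv_charmatrix]
  simp

lemma stmt19_mem_spectrum {n : ℕ} (M : Matrix (Fin n) (Fin n) K) (μ : K) :
    μ ∈ spectrum K M ↔ M.charpoly.eval μ = 0 := by
  rw [spectrum.mem_iff, stmt19_eval_charpoly, stmt19_algebraMap_eq,
    Matrix.isUnit_iff_isUnit_det, isUnit_iff_ne_zero, not_not]

lemma stmt19_conj_pow {R : Type*} [Ring R] (S S' P : R) (h1 : S * S' = 1)
    (h2 : S' * S = 1) (r : ℕ) : (S * P * S') ^ r = S * P ^ r * S' := by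
  induction r with
  | zero => simp [h1]
  | succ r ih =>
      rw [pow_succ, ih, pow_succ]
      calc S * P ^ r * S' * (S * P * S') = S * P ^ r * (S' * S) * P * S' := by
            noncomm_ring
        _ = S * (P ^ r * P) * S' := by rw [h2]; noncomm_ring

lemma stmt19_binomial {n : ℕ} (A : Matrix (Fin n) (Fin n) K) (M r : ℕ)
    (hA : A ^ (r + 1) = 0) :
    ((1 + A) ^ M - 1) ^ r = ((M : K) ^ r) • A ^ r := by
  have h1 : (X : K[X]) ∣ ((1 + X) ^ M - 1) := by
    rw [Polynomial.X_dvd_iff]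
    simp [Polynomial.coeff_one_add_X_pow]
  obtain ⟨h, hh⟩ := h1
  have hc : h.coeff 0 = (M : K) := by
    have h2 := congrArg (fun p => Polynomial.coeff p 1) hh
    simpa [Polynomial.coeff_one_add_X_pow, Polynomial.coeff_X_mul,
      Polynomial.coeff_one] using h2.symm
  have h2 : (X : K[X]) ∣ (h ^ r - C ((M : K) ^ r)) := by
    rw [Polynomial.X_dvd_iff]
    have h3 : (h ^ r).coeff 0 = (h.coeff 0) ^ r := by
      simp [Polynomial.coeff_zero_eq_eval_zero]
    rw [Polynomial.coeff_sub, h3, hc, Polynomial.coeff_C_zero, sub_self]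
  obtain ⟨g, hg⟩ := h2
  have hpoly : (((1 + X : K[X])) ^ M - 1) ^ r = C ((M : K) ^ r) * X ^ r + X ^ (r + 1) * g := by
    rw [hh, mul_pow]
    have : h ^ r = C ((M : K) ^ r) + X * g := by linear_combination hg
    rw [this]
    ring
  calc ((1 + A) ^ M - 1) ^ r
      = Polynomial.aeval A ((((1 + X : K[X])) ^ M - 1) ^ r) := by simp
    _ = Polynomial.aeval A (C ((M : K) ^ r) * X ^ r + X ^ (r + 1) * g) := by rw [hpoly]
    _ = ((M : K) ^ r) • A ^ r + A ^ (r + 1) * Polynomial.aeval A g := by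
        simp only [map_add, _root_.map_mul, map_pow, Polynomial.aeval_C, Polynomial.aeval_X,
          Algebra.algebraMap_eq_smul_one, _root_.smul_pow, one_pow, smul_mul_assoc, one_mul]
    _ = ((M : K) ^ r) • A ^ r := by rw [hA]; simp

lemma stmt19_unipotent_pow [IsAlgClosed K] {n : ℕ} (u T : (Matrix (Fin n) (Fin n) K)ˣ)
    (m : ℕ) (hm : 2 ≤ m) (hconj : T * u * T⁻¹ = u ^ m) :
    ∃ N : ℕ, 0 < N ∧ (((u : Matrix (Fin n) (Fin n) K)) ^ N - 1) ^ n = 0 := by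
  classical
  set W : Matrix (Fin n) (Fin n) K := (u : Matrix (Fin n) (Fin n) K) with hW
  have hfin : (spectrum K W).Finite := by
    apply Set.Finite.subset (W.charpoly.roots.toFinset : Finset K).finite_toSet
    intro μ hμ
    rw [stmt19_mem_spectrum] at hμ
    simp only [Finset.coe_sort_coe, Multiset.mem_toFinset, Finset.mem_coe]
    exact Polynomial.mem_roots'.2 ⟨W.charpoly_monic.ne_zero, hμ⟩
  have hstab : ∀ lam ∈ spectrum K W, lam ^ m ∈ spectrum K W := by
    intro lam hlam
    have h1 : spectrum K (W ^ m) = (· ^ m) '' spectrum K W :=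
      spectrum.map_pow_of_pos W (by omega)
    have h2 : spectrum K (W ^ m) = spectrum K W :=
      calc spectrum K (W ^ m)
          = spectrum K ((T * u * T⁻¹ : (Matrix (Fin n) (Fin n) K)ˣ) : Matrix (Fin n) (Fin n) K) := by
            rw [hconj, Units.val_pow_eq_pow_val]
        _ = spectrum K W := by
            rw [Units.val_mul, Units.val_mul]
            exact spectrum.units_conjugate
    rw [← h2, h1]
    exact Set.mem_image_of_mem _ hlam
  have hroot : ∀ lam ∈ spectrum K W, ∃ d, 0 < d ∧ lam ^ d = 1 := by
    intro lam hlam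
    have hlam0 : lam ≠ 0 := by
      rintro rfl
      rw [spectrum.mem_iff] at hlam
      apply hlam
      rw [map_zero, zero_sub]
      exact u.isUnit.neg
    have hmem : ∀ j : ℕ, lam ^ (m ^ j) ∈ spectrum K W := by
      intro j
      induction j with
      | zero => simpa using hlam
      | succ j ih =>
        have := hstab _ ih
        rwa [← pow_mul, ← pow_succ] at this
    haveI := hfin.to_subtype
    obtain ⟨i, j, hij, hval⟩ := Finite.exists_ne_map_eq_of_infinite
      (fun j : ℕ => (⟨lam ^ (m ^ j), hmem j⟩ : spectrum K W))
    have hval' : lam ^ (m ^ i) = lam ^ (m ^ j) := congrArg Subtype.val hval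
    rcases hij.lt_or_gt with h | h
    · refine ⟨m ^ j - m ^ i, by
        have := Nat.pow_lt_pow_right (by omega : 1 < m) h; omega, ?_⟩
      have hpe : lam ^ (m ^ i) * lam ^ (m ^ j - m ^ i) = lam ^ (m ^ j) := by
        rw [← pow_add]
        congr 1
        have := Nat.pow_le_pow_right (by omega : 1 ≤ m) h.le
        omega
      exact mul_left_cancel₀ (pow_ne_zero _ hlam0) (by rw [mul_one, hpe]; exact hval'.symm)
    · refine ⟨m ^ i - m ^ j, by
        have := Nat.pow_lt_pow_right (by omega : 1 < m) h; omega, ?_⟩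
      have hpe : lam ^ (m ^ j) * lam ^ (m ^ i - m ^ j) = lam ^ (m ^ i) := by
        rw [← pow_add]
        congr 1
        have := Nat.pow_le_pow_right (by omega : 1 ≤ m) h.le
        omega
      exact mul_left_cancel₀ (pow_ne_zero _ hlam0) (by rw [mul_one, hpe]; exact hval')
  have hex : ∀ lam : K, ∃ e : ℕ, 0 < e ∧ (lam ∈ spectrum K W → lam ^ e = 1) := by
    intro lam
    by_cases h : lam ∈ spectrum K W
    · obtain ⟨e, he1, he2⟩ := hroot lam h
      exact ⟨e, he1, fun _ => he2⟩
    · exact ⟨1, one_pos, fun h' => absurd h' h⟩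
  choose d hdpos hdone using hex
  set N : ℕ := ∏ lam ∈ hfin.toFinset, d lam with hN
  have hNpos : 0 < N := Finset.prod_pos fun lam _ => hdpos lam
  have hNone : ∀ lam ∈ spectrum K W, lam ^ N = 1 := by
    intro lam hlam
    have hmem : lam ∈ hfin.toFinset := hfin.mem_toFinset.2 hlam
    rw [hN, ← Finset.mul_prod_erase _ _ hmem, pow_mul, hdone lam hlam, one_pow]
  refine ⟨N, hNpos, ?_⟩
  set B : Matrix (Fin n) (Fin n) K := W ^ N - 1 with hB
  have hspecB : ∀ μ ∈ spectrum K B, μ = 0 := by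
    intro μ hμ
    have h1 : μ + 1 ∈ spectrum K (W ^ N) := by
      rw [spectrum.mem_iff] at hμ ⊢
      convert hμ using 2
      rw [map_add, _root_.map_one, hB]
      abel
    rw [spectrum.map_pow_of_pos W hNpos] at h1
    obtain ⟨lam, hlam, he⟩ := h1
    have h3 : (1 : K) = μ + 1 := (hNone lam hlam).symm.trans he
    linear_combination -h3
  have hsp : B.charpoly.Splits := IsAlgClosed.splits _
  have hroots0 : ∀ μ ∈ B.charpoly.roots, μ = 0 := by
    intro μ hμ
    apply hspecB
    rw [stmt19_mem_spectrum]
    exact (Polynomial.mem_roots'.1 hμ).2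
  have hcard : B.charpoly.roots.card = n := by
    have h4 := hsp.natDegree_eq_card_roots.symm
    simpa [Matrix.charpoly_natDegree_eq_dim, Polynomial.map_id] using h4
  have hcp : B.charpoly = X ^ n := by
    rw [hsp.eq_prod_roots_of_monic B.charpoly_monic]
    have h5 : B.charpoly.roots = Multiset.replicate n 0 :=
      Multiset.eq_replicate.2 ⟨hcard, hroots0⟩
    rw [h5]
    simp [Multiset.map_replicate, Multiset.prod_replicate]
  have h6 := B.aeval_self_charpoly
  rw [hcp] at h6
  simpa using h6

lemma stmt19_two_pow_ne [CharZero K] {a b : ℕ} (h : a < b) : (2 : K) ^ a ≠ (2 : K) ^ b := by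
  intro heq
  have h1 : (2 : K) ^ a * (2 : K) ^ (b - a) = (2 : K) ^ b := by
    rw [← pow_add]
    congr 1
    omega
  have h2 : (2 : K) ^ (b - a) = 1 :=
    mul_left_cancel₀ (pow_ne_zero a (two_ne_zero)) (by rw [h1, mul_one, heq])
  have h3 : ((2 ^ (b - a) : ℕ) : K) = ((1 : ℕ) : K) := by push_cast; rw [h2]
  have h4 := Nat.cast_injective h3
  have h5 : b - a ≠ 0 := by omega
  have := Nat.one_lt_two_pow_iff.2 h5
  omega

end Stmt19Aux

/-- The group `Kˣ ⋉ (⊕_{k≥1} K)`, where `t ∈ Kˣ` acts on the `k`-th summand by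
multiplication by `t^k` (group law `(t,a)·(s,b) = (ts, a + t•b)` with `(t•b)_k = t^k b_k`),
is not linear: for every `n` there is no injective multiplication-preserving map into
`GL_n(K)`, where `K` is an algebraically closed field of characteristic zero. -/
theorem stmt19 {K : Type*} [Field K] [IsAlgClosed K] [CharZero K] (n : ℕ) :
    ¬ ∃ f : Kˣ × (ℕ+ →₀ K) → GL (Fin n) K,
        Function.Injective f ∧
        ∀ (t s : Kˣ) (a b c : ℕ+ →₀ K),
          (∀ k : ℕ+, c k = (t : K) ^ (k : ℕ) * b k) →
          f (t * s, a + c) = f (t, a) * f (s, b) := by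
  rintro ⟨f, hinj, hmul⟩
  classical
  -- basic homomorphism facts
  have hone : f (1, 0) = 1 := by
    have h := hmul 1 1 0 0 0 (fun k => by simp)
    simp only [mul_one, add_zero] at h
    have h2 : f (1, 0) * 1 = f (1, 0) * f (1, 0) := by rw [mul_one, ← h]
    exact (mul_left_cancel h2).symm
  have hadd : ∀ a b : ℕ+ →₀ K, f (1, a + b) = f (1, a) * f (1, b) := by
    intro a b
    have h := hmul 1 1 a b b (fun k => by simp)
    simpa using h
  have hpow : ∀ (a : ℕ+ →₀ K) (M : ℕ), f (1, M • a) = f (1, a) ^ M := by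
    intro a M
    induction M with
    | zero => simpa using hone
    | succ M ih => rw [succ_nsmul, hadd, ih, pow_succ]
  -- handle n = 0
  rcases Nat.eq_zero_or_pos n with hn | hn
  · subst hn
    haveI : Subsingleton (Matrix (Fin 0) (Fin 0) K) := ⟨fun a b => by ext i; exact i.elim0⟩
    haveI : Subsingleton (GL (Fin 0) K) := ⟨fun a b => Units.ext (Subsingleton.elim _ _)⟩
    have h := hinj (Subsingleton.elim (f (1, Finsupp.single 1 1)) (f (1, 0)))
    have h2 : (Finsupp.single (1 : ℕ+) (1 : K)) = 0 := congrArg Prod.snd h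
    exact one_ne_zero (Finsupp.single_eq_zero.1 h2)
  -- the torus element
  set t2 : Kˣ := Units.mk0 (2 : K) two_ne_zero with ht2
  set T : GL (Fin n) K := f (t2, 0) with hT
  have hconj : ∀ b c : ℕ+ →₀ K, (∀ k : ℕ+, c k = (2 : K) ^ (k : ℕ) * b k) →
      T * f (1, b) = f (1, c) * T := by
    intro b c hc
    have e1 := hmul t2 1 0 b c (fun k => by simpa [ht2] using hc k)
    have e2 := hmul 1 t2 c 0 0 (fun k => by simp)
    simp only [mul_one, one_mul, zero_add, add_zero] at e1 e2
    rw [← e1, ← e2]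
  -- unipotent generators
  set k : Fin (n * n + 1) → ℕ := fun i => (n + 1) ^ ((i : ℕ) + 1) with hk
  have hkpos : ∀ i, 0 < k i := fun i => pow_pos (by omega) _
  set kp : Fin (n * n + 1) → ℕ+ := fun i => ⟨k i, hkpos i⟩ with hkp
  set u : Fin (n * n + 1) → GL (Fin n) K := fun i => f (1, Finsupp.single (kp i) 1) with hu
  have hupow : ∀ (i) (M : ℕ), u i ^ M = f (1, Finsupp.single (kp i) (M : K)) := by
    intro i M
    rw [hu, ← hpow]
    congr 2
    rw [Finsupp.smul_single]
    congr 1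
    simp
  have hune : ∀ (i) (M : ℕ), 0 < M → u i ^ M ≠ 1 := by
    intro i M hM h
    rw [hupow i M, ← hone] at h
    have h2 : (Finsupp.single (kp i) ((M : K))) = 0 := congrArg Prod.snd (hinj h)
    have h3 : ((M : K)) = 0 := Finsupp.single_eq_zero.1 h2
    rw [Nat.cast_eq_zero] at h3
    omega
  have hcu : ∀ i, T * u i * T⁻¹ = u i ^ (2 ^ k i) := by
    intro i
    have hc : ∀ j : ℕ+, (Finsupp.single (kp i) ((2 : K) ^ (k i)) : ℕ+ →₀ K) j
        = (2 : K) ^ (j : ℕ) * (Finsupp.single (kp i) (1 : K)) j := by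
      intro j
      rcases eq_or_ne (kp i) j with rfl | hne
      · rw [Finsupp.single_eq_same, Finsupp.single_eq_same, mul_one]
        rfl
      · simp [Finsupp.single_eq_of_ne' hne]
    have h := hconj _ _ hc
    have hcast : ((2 ^ k i : ℕ) : K) = (2 : K) ^ (k i) := by push_cast; rfl
    have h2 : f (1, Finsupp.single (kp i) ((2 : K) ^ (k i))) = u i ^ (2 ^ k i) := by
      rw [hupow i (2 ^ k i), hcast]
    rw [h2] at h
    rw [hu] at h ⊢
    rw [h, mul_assoc, mul_inv_cancel, mul_one]
  -- pick unipotent powers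
  have hNex : ∀ i, ∃ N : ℕ, 0 < N ∧
      (((u i : Matrix (Fin n) (Fin n) K)) ^ N - 1) ^ n = 0 := by
    intro i
    refine stmt19_unipotent_pow (u i) T (2 ^ k i) ?_ (hcu i)
    calc (2 : ℕ) = 2 ^ 1 := by norm_num
      _ ≤ 2 ^ k i := Nat.pow_le_pow_right (by norm_num) (hkpos i)
  choose N hNpos hNnil using hNex
  set B : Fin (n * n + 1) → Matrix (Fin n) (Fin n) K :=
    fun i => ((u i : Matrix (Fin n) (Fin n) K)) ^ (N i) - 1 with hBdef
  have hBne : ∀ i, B i ≠ 0 := by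
    intro i h
    apply hune i (N i) (hNpos i)
    apply Units.ext
    rw [Units.val_pow_eq_pow_val, Units.val_one]
    rw [hBdef] at h
    simpa [sub_eq_zero] using h
  -- extract the top nonvanishing power of B i
  have hrex : ∀ i, ∃ r, (0 < r ∧ r < n) ∧ B i ^ r ≠ 0 ∧ B i ^ (r + 1) = 0 := by
    intro i
    have hex0 : ∃ j, B i ^ j = 0 := ⟨n, hNnil i⟩
    have hj0 : B i ^ (Nat.find hex0) = 0 := Nat.find_spec hex0
    have hj0le : Nat.find hex0 ≤ n := Nat.find_min' hex0 (hNnil i)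
    have h1 : ¬ (B i ^ 1 = 0) := by simpa using hBne i
    have h0 : ¬ (B i ^ 0 = 0) := by
      simp only [pow_zero]
      intro h
      have h2 := congrFun (congrFun h ⟨0, hn⟩) ⟨0, hn⟩
      simp [Matrix.one_apply] at h2
    have hj02 : 2 ≤ Nat.find hex0 := by
      by_contra hlt
      push_neg at hlt
      have h01 : Nat.find hex0 = 0 ∨ Nat.find hex0 = 1 := by omega
      rcases h01 with h' | h' <;> rw [h'] at hj0
      · exact h0 hj0
      · exact h1 hj0
    refine ⟨Nat.find hex0 - 1, ⟨by omega, by omega⟩, ?_, ?_⟩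
    · exact Nat.find_min hex0 (by omega)
    · rw [show Nat.find hex0 - 1 + 1 = Nat.find hex0 by omega]
      exact hj0
  choose r hr1 hrne hrz using hrex
  -- the conjugation endomorphism and its eigenvectors
  set S : Matrix (Fin n) (Fin n) K := (T : Matrix (Fin n) (Fin n) K) with hS
  set S' : Matrix (Fin n) (Fin n) K := ((T⁻¹ : GL (Fin n) K) : Matrix (Fin n) (Fin n) K) with hS'
  have hSS' : S * S' = 1 := by
    rw [hS, hS', ← Units.val_mul, mul_inv_cancel, Units.val_one]
  have hS'S : S' * S = 1 := by
    rw [hS, hS', ← Units.val_mul, inv_mul_cancel, Units.val_one]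
  have heig : ∀ i, S * (B i ^ r i) * S' = ((2 : K) ^ (k i * r i)) • B i ^ r i := by
    intro i
    have hm := congrArg Units.val (hcu i)
    rw [Units.val_mul, Units.val_mul, Units.val_pow_eq_pow_val] at hm
    have h2 : S * ((u i : Matrix (Fin n) (Fin n) K) ^ N i) * S'
        = ((u i : Matrix (Fin n) (Fin n) K) ^ N i) ^ (2 ^ k i) := by
      rw [← stmt19_conj_pow S S' _ hSS' hS'S (N i), hm, ← pow_mul, mul_comm, pow_mul]
    have h3 : S * B i * S' = (1 + B i) ^ (2 ^ k i) - 1 := by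
      have h4 : (u i : Matrix (Fin n) (Fin n) K) ^ N i = 1 + B i := by
        rw [hBdef]; noncomm_ring
      rw [hBdef]
      rw [mul_sub, sub_mul, mul_one, hSS', ← hBdef, ← h4, h2, h4]
    have h5 : S * (B i ^ r i) * S' = (S * B i * S') ^ r i :=
      (stmt19_conj_pow S S' (B i) hSS' hS'S (r i)).symm
    rw [h5, h3, stmt19_binomial (B i) _ (r i) (hrz i)]
    congr 1
    push_cast
    rw [← pow_mul]
  set Φ : Module.End K (Matrix (Fin n) (Fin n) K) :=
    (LinearMap.mulRight K S').comp (LinearMap.mulLeft K S) with hΦ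
  have hEig : ∀ i, Φ.HasEigenvector ((2 : K) ^ (k i * r i)) (B i ^ r i) := by
    intro i
    rw [Module.End.hasEigenvector_iff]
    refine ⟨Module.End.mem_eigenspace_iff.2 ?_, hrne i⟩
    simpa [hΦ, LinearMap.mulLeft_apply, LinearMap.mulRight_apply] using heig i
  have hInj : Function.Injective fun i : Fin (n * n + 1) => (2 : K) ^ (k i * r i) := by
    have hmono : ∀ i j : Fin (n * n + 1), i < j → k i * r i < k j * r j := by
      intro i j hij
      have h1 : k i * r i < k i * (n + 1) :=
        (Nat.mul_lt_mul_left (hkpos i)).2 (by have := (hr1 i).2; omega)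
      have h2 : k i * (n + 1) = (n + 1) ^ ((i : ℕ) + 2) := by
        rw [hk]; ring
      have h3 : (n + 1) ^ ((i : ℕ) + 2) ≤ (n + 1) ^ ((j : ℕ) + 1) := by
        apply Nat.pow_le_pow_right (by omega)
        have : (i : ℕ) < (j : ℕ) := hij
        omega
      have h4 : k j ≤ k j * r j := Nat.le_mul_of_pos_right _ (hr1 j).1
      calc k i * r i < k i * (n + 1) := h1
        _ = (n + 1) ^ ((i : ℕ) + 2) := h2
        _ ≤ (n + 1) ^ ((j : ℕ) + 1) := h3
        _ = k j := rfl
        _ ≤ k j * r j := h4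
    intro i j hij
    by_contra hne
    rcases Ne.lt_or_gt hne with h | h
    · exact stmt19_two_pow_ne (hmono i j h) hij
    · exact stmt19_two_pow_ne (hmono j i h) hij.symm
  have hLI := Φ.eigenvectors_linearIndependent'
    (fun i : Fin (n * n + 1) => (2 : K) ^ (k i * r i)) hInj
    (fun i => B i ^ r i) hEig
  have hcardle := hLI.fintype_card_le_finrank
  rw [Module.finrank_matrix] at hcardle
  simp only [Fintype.card_fin, Module.finrank_self, mul_one] at hcardle
  omega
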